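/- Let m ≥ 1 and let c(1),…,c(m) be positive reals with Σ_{i=1}^m 1/c(i) > 1. Then, with k = 2m−1 and n = 2m, there exist deterministic online algorithms B(1),…,B(m) of type (2m−1, 2m) such that no deterministic online algorithm A of type (2m−1, 2m) is simultaneously c(i)-competitive against B(i) for every i ∈ {1,…,m}. -/

import Mathlib

/-!
Paging model: vertices are `Fin n`, configurations are `k`-element subsets of
`Fin n`.  A deterministic online algorithm of type `(k,n)` maps each request
history to a configuration covering the last request; its cost on `σ` is the
total number of newly covered vertices over the run starting from `{0,…,k−1}`.
`A` is `c`-competitive against `B` if `C_A(σ) ≤ c·C_B(σ) + a` for some constant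
`a` and all `σ`.

STATEMENT (necessity): Let `m ≥ 1` and let `c(1),…,c(m)` be positive reals with
`Σ 1/c(i) > 1`.  Then, with `k = 2m−1` and `n = 2m`, there exist deterministic
online algorithms `B(1),…,B(m)` of type `(2m−1, 2m)` such that no deterministic
online algorithm `A` of type `(2m−1, 2m)` is simultaneously `c(i)`-competitive
against `B(i)` for every `i`.
-/

/-- The initial configuration `{0, …, k−1}` as a subset of `Fin n`. -/
def initConf (k n : ℕ) : Finset (Fin n) :=
  Finset.univ.filter (fun v => (v : ℕ) < k)

/-- A deterministic online algorithm of type `(k,n)`: a map from request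
histories to `k`-element configurations, such that after any request the
configuration covers that request. -/
structure DetAlg (k n : ℕ) where
  conf : List (Fin n) → Finset (Fin n)
  card_eq : ∀ l : List (Fin n), (conf l).card = k
  mem_last : ∀ (l : List (Fin n)) (r : Fin n), r ∈ conf (l ++ [r])

/-- The configuration of `A` after the first `t` requests of `σ`
(the configuration at time `0` is `{0,…,k−1}`). -/
def detConfAt {k n : ℕ} (A : DetAlg k n) (σ : List (Fin n)) (t : ℕ) : Finset (Fin n) :=
  if t = 0 then initConf k n else A.conf (σ.take t)

/-- The cost incurred by the deterministic online algorithm `A` on the request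
sequence `σ`. -/
def detCost {k n : ℕ} (A : DetAlg k n) (σ : List (Fin n)) : ℕ :=
  ∑ t ∈ Finset.range σ.length, (detConfAt A σ (t + 1) \ detConfAt A σ t).card

namespace NoComb

lemma card_initConf {k n : ℕ} (h : k ≤ n) : (initConf k n).card = k := by
  have : initConf k n =
      (Finset.range k).attachFin (fun a ha => lt_of_lt_of_le (Finset.mem_range.mp ha) h) := by
    ext v
    simp [initConf, Finset.mem_attachFin]
  rw [this, Finset.card_attachFin, Finset.card_range]

/-- pair endpoints -/
def pa (m : ℕ) (i : Fin m) : Fin (2 * m) := ⟨2 * i.val, by have := i.isLt; omega⟩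
def pb (m : ℕ) (i : Fin m) : Fin (2 * m) := ⟨2 * i.val + 1, by have := i.isLt; omega⟩

lemma pa_ne_pb {m : ℕ} (i : Fin m) : pa m i ≠ pb m i := by
  simp [pa, pb, Fin.ext_iff]

def hstep (m : ℕ) (i : Fin m) (h r : Fin (2 * m)) : Fin (2 * m) :=
  if r = h then (if h = pa m i then pb m i else pa m i) else h

def holeFun (m : ℕ) (i : Fin m) (l : List (Fin (2 * m))) : Fin (2 * m) :=
  l.foldl (hstep m i) (pa m i)

lemma holeFun_append {m : ℕ} (i : Fin m) (l : List (Fin (2 * m))) (r : Fin (2 * m)) :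
    holeFun m i (l ++ [r]) = hstep m i (holeFun m i l) r := by
  simp [holeFun, List.foldl_append]

lemma ne_hstep {m : ℕ} (i : Fin m) (h r : Fin (2 * m)) : hstep m i h r ≠ r := by
  unfold hstep
  split_ifs with h1 h2
  · subst h1; subst h2; exact (pa_ne_pb i).symm
  · subst h1; exact fun hh => h2 hh.symm
  · exact fun hh => h1 hh.symm

lemma holeFun_mem {m : ℕ} (i : Fin m) (l : List (Fin (2 * m))) :
    holeFun m i l = pa m i ∨ holeFun m i l = pb m i := by
  unfold holeFun
  suffices H : ∀ h : Fin (2 * m), (h = pa m i ∨ h = pb m i) →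
      (l.foldl (hstep m i) h = pa m i ∨ l.foldl (hstep m i) h = pb m i) from
    H _ (Or.inl rfl)
  induction l with
  | nil => intro h hh; simpa using hh
  | cons x l ih =>
      intro h hh
      rw [List.foldl_cons]
      apply ih
      unfold hstep
      split_ifs <;> tauto

lemma changed_eq {m : ℕ} (i : Fin m) (l : List (Fin (2 * m))) (r : Fin (2 * m))
    (hne : holeFun m i (l ++ [r]) ≠ holeFun m i l) : r = holeFun m i l := by
  by_cases h1 : r = holeFun m i l
  · exact h1
  · exfalso
    apply hne
    rw [holeFun_append]
    unfold hstep
    rw [if_neg h1]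

/-- The algorithm `B i`: its configuration always misses exactly the current hole. -/
def Balg (m : ℕ) (i : Fin m) : DetAlg (2 * m - 1) (2 * m) where
  conf l := Finset.univ.erase (holeFun m i l)
  card_eq l := by
    rw [Finset.card_erase_of_mem (Finset.mem_univ _)]
    simp
  mem_last l r := by
    rw [Finset.mem_erase, holeFun_append]
    exact ⟨(ne_hstep i _ r).symm, Finset.mem_univ r⟩

section Adversary

variable {m : ℕ}

def prevConf (m : ℕ) (A : DetAlg (2 * m - 1) (2 * m)) (l : List (Fin (2 * m))) :
    Finset (Fin (2 * m)) :=
  if l = [] then initConf (2 * m - 1) (2 * m) else A.conf l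

lemma card_prevConf (hm : 1 ≤ m) (A : DetAlg (2 * m - 1) (2 * m)) (l : List (Fin (2 * m))) :
    (prevConf m A l).card = 2 * m - 1 := by
  unfold prevConf
  split
  · exact card_initConf (by omega)
  · exact A.card_eq l

lemma compl_nonempty (hm : 1 ≤ m) (A : DetAlg (2 * m - 1) (2 * m)) (l : List (Fin (2 * m))) :
    ((prevConf m A l)ᶜ).Nonempty := by
  rw [← Finset.card_pos, Finset.card_compl, card_prevConf hm A l]
  simp
  omega

def adv (hm : 1 ≤ m) (A : DetAlg (2 * m - 1) (2 * m)) (l : List (Fin (2 * m))) : Fin (2 * m) :=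
  ((prevConf m A l)ᶜ).min' (compl_nonempty hm A l)

lemma adv_not_mem (hm : 1 ≤ m) (A : DetAlg (2 * m - 1) (2 * m)) (l : List (Fin (2 * m))) :
    adv hm A l ∉ prevConf m A l := by
  have := Finset.min'_mem _ (compl_nonempty hm A l)
  exact Finset.mem_compl.mp this

def advSeq (hm : 1 ≤ m) (A : DetAlg (2 * m - 1) (2 * m)) : ℕ → List (Fin (2 * m))
  | 0 => []
  | T + 1 => advSeq hm A T ++ [adv hm A (advSeq hm A T)]

lemma length_advSeq (hm : 1 ≤ m) (A : DetAlg (2 * m - 1) (2 * m)) (T : ℕ) :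
    (advSeq hm A T).length = T := by
  induction T with
  | zero => rfl
  | succ T ih => simp [advSeq, ih]

lemma take_advSeq (hm : 1 ≤ m) (A : DetAlg (2 * m - 1) (2 * m)) {t T : ℕ} (h : t ≤ T) :
    (advSeq hm A T).take t = advSeq hm A t := by
  induction T with
  | zero => interval_cases t; simp [advSeq]
  | succ T ih =>
      rcases Nat.lt_or_ge t (T + 1) with h' | h'
      · rw [show advSeq hm A (T+1) = advSeq hm A T ++ [adv hm A (advSeq hm A T)] from rfl,
          List.take_append_of_le_length (by rw [length_advSeq]; omega), ih (by omega)]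
      · have ht : t = T + 1 := by omega
        subst ht
        have h2 := List.take_length (l := advSeq hm A (T+1))
        rwa [length_advSeq] at h2

lemma detConfAt_advSeq (hm : 1 ≤ m) (A : DetAlg (2 * m - 1) (2 * m)) {t T : ℕ} (h : t ≤ T) :
    detConfAt A (advSeq hm A T) t = prevConf m A (advSeq hm A t) := by
  unfold detConfAt prevConf
  by_cases h0 : t = 0
  · subst h0; simp [advSeq]
  · rw [if_neg h0, take_advSeq hm A h, if_neg]
    intro hnil
    exact h0 (by simpa [hnil] using (length_advSeq hm A t).symm)

lemma le_detCost (hm : 1 ≤ m) (A : DetAlg (2 * m - 1) (2 * m)) (T : ℕ) :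
    T ≤ detCost A (advSeq hm A T) := by
  unfold detCost
  rw [length_advSeq]
  calc T = ∑ _t ∈ Finset.range T, 1 := by simp
  _ ≤ _ := by
      apply Finset.sum_le_sum
      intro t ht
      rw [Finset.mem_range] at ht
      apply Finset.card_pos.mpr
      refine ⟨adv hm A (advSeq hm A t), Finset.mem_sdiff.mpr ⟨?_, ?_⟩⟩
      · rw [show detConfAt A (advSeq hm A T) (t+1) = A.conf ((advSeq hm A T).take (t+1)) from
          if_neg (by omega), take_advSeq hm A (by omega)]
        exact A.mem_last _ _
      · rw [detConfAt_advSeq hm A (by omega)]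
        exact adv_not_mem hm A _

/-- whether `B i`'s hole changes at step `t+1` -/
def Chg (hm : 1 ≤ m) (A : DetAlg (2 * m - 1) (2 * m)) (t : ℕ) (i : Fin m) : Prop :=
  holeFun m i (advSeq hm A (t + 1)) ≠ holeFun m i (advSeq hm A t)

instance (hm : 1 ≤ m) (A : DetAlg (2 * m - 1) (2 * m)) (t : ℕ) (i : Fin m) :
    Decidable (Chg hm A t i) := by unfold Chg; infer_instance

lemma chg_unique (hm : 1 ≤ m) (A : DetAlg (2 * m - 1) (2 * m)) (t : ℕ) {i j : Fin m}
    (hi : Chg hm A t i) (hj : Chg hm A t j) : i = j := by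
  have ri := changed_eq i _ _ hi
  have rj := changed_eq j _ _ hj
  have mi := holeFun_mem i (advSeq hm A t)
  have mj := holeFun_mem j (advSeq hm A t)
  rw [← ri] at mi
  rw [← rj] at mj
  apply Fin.ext
  rcases mi with h1 | h1 <;> rcases mj with h2 | h2 <;>
    (rw [h1] at h2; simp only [pa, pb, Fin.ext_iff] at h2; omega)

lemma term_bound (hm : 1 ≤ m) (A : DetAlg (2 * m - 1) (2 * m)) {t T : ℕ} (ht : t < T)
    (i : Fin m) :
    (detConfAt (Balg m i) (advSeq hm A T) (t + 1) \ detConfAt (Balg m i) (advSeq hm A T) t).card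
      ≤ if t = 0 then 1 else (if Chg hm A t i then 1 else 0) := by
  set σ := advSeq hm A T
  have hc1 : detConfAt (Balg m i) σ (t + 1)
      = Finset.univ.erase (holeFun m i (advSeq hm A (t + 1))) := by
    rw [show detConfAt (Balg m i) σ (t+1) = (Balg m i).conf (σ.take (t+1)) from if_neg (by omega),
      take_advSeq hm A (by omega)]
    rfl
  by_cases h0 : t = 0
  · subst h0
    rw [if_pos rfl]
    have hsub : detConfAt (Balg m i) σ 1 \ detConfAt (Balg m i) σ 0 ⊆ (initConf (2*m-1) (2*m))ᶜ := by
      intro v hv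
      rw [Finset.mem_sdiff] at hv
      rw [Finset.mem_compl]
      simpa [detConfAt] using hv.2
    calc _ ≤ ((initConf (2*m-1) (2*m))ᶜ).card := Finset.card_le_card hsub
    _ = 1 := by
        rw [Finset.card_compl, card_initConf (by omega)]
        simp
        omega
  · rw [if_neg h0]
    have hc0 : detConfAt (Balg m i) σ t
        = Finset.univ.erase (holeFun m i (advSeq hm A t)) := by
      rw [show detConfAt (Balg m i) σ t = (Balg m i).conf (σ.take t) from if_neg h0,
        take_advSeq hm A (by omega)]
      rfl
    rw [hc1, hc0]
    by_cases hch : Chg hm A t i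
    · rw [if_pos hch]
      have hsub : Finset.univ.erase (holeFun m i (advSeq hm A (t + 1)))
          \ Finset.univ.erase (holeFun m i (advSeq hm A t)) ⊆ {holeFun m i (advSeq hm A t)} := by
        intro v hv
        rw [Finset.mem_sdiff] at hv
        rw [Finset.mem_singleton]
        by_contra hne
        exact hv.2 (Finset.mem_erase.mpr ⟨hne, Finset.mem_univ v⟩)
      calc _ ≤ ({holeFun m i (advSeq hm A t)} : Finset (Fin (2*m))).card :=
            Finset.card_le_card hsub
      _ = 1 := Finset.card_singleton _
    · rw [if_neg hch]
      have : holeFun m i (advSeq hm A (t + 1)) = holeFun m i (advSeq hm A t) := by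
        by_contra h; exact hch h
      rw [this]
      simp

lemma sum_chg_le_one (hm : 1 ≤ m) (A : DetAlg (2 * m - 1) (2 * m)) (t : ℕ) :
    (∑ i : Fin m, if Chg hm A t i then 1 else 0) ≤ 1 := by
  rw [← Finset.card_filter]
  apply Finset.card_le_one.mpr
  intro a ha b hb
  rw [Finset.mem_filter] at ha hb
  exact chg_unique hm A t ha.2 hb.2

lemma sum_ite_range (m T : ℕ) : (∑ t ∈ Finset.range T, if t = 0 then m else 1) ≤ m + T := by
  induction T with
  | zero => simp
  | succ T ih =>
      rw [Finset.sum_range_succ]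
      split_ifs with h
      · subst h; simp
      · omega

lemma sum_detCost_B (hm : 1 ≤ m) (A : DetAlg (2 * m - 1) (2 * m)) (T : ℕ) :
    ∑ i : Fin m, detCost (Balg m i) (advSeq hm A T) ≤ m + T := by
  unfold detCost
  simp only [length_advSeq]
  rw [Finset.sum_comm]
  calc _ ≤ ∑ t ∈ Finset.range T, (if t = 0 then m else 1) := by
        apply Finset.sum_le_sum
        intro t ht
        rw [Finset.mem_range] at ht
        by_cases h0 : t = 0
        · subst h0
          rw [if_pos rfl]
          calc _ ≤ ∑ _i : Fin m, 1 := by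
                apply Finset.sum_le_sum
                intro i _
                have := term_bound hm A ht i
                rwa [if_pos rfl] at this
          _ = m := by simp
        · rw [if_neg h0]
          calc _ ≤ ∑ i : Fin m, (if Chg hm A t i then 1 else 0) := by
                apply Finset.sum_le_sum
                intro i _
                have := term_bound hm A ht i
                rwa [if_neg h0] at this
          _ ≤ 1 := sum_chg_le_one hm A t
  _ ≤ m + T := sum_ite_range m T

end Adversary

end NoComb


/-- Necessity: if `Σ 1/c(i) > 1` then no single online algorithm of type
`(2m−1, 2m)` can be `c(i)`-competitive against suitably chosen algorithms
`B(1),…,B(m)` simultaneously. -/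
theorem no_combining_when_sum_exceeds_one (m : ℕ) (hm : 1 ≤ m)
    (c : Fin m → ℝ) (hc : ∀ i, 0 < c i) (hsum : 1 < ∑ i, 1 / c i) :
    ∃ B : Fin m → DetAlg (2 * m - 1) (2 * m),
      ¬ ∃ A : DetAlg (2 * m - 1) (2 * m), ∀ i : Fin m, ∃ a : ℝ,
        ∀ σ : List (Fin (2 * m)),
          (detCost A σ : ℝ) ≤ c i * (detCost (B i) σ : ℝ) + a := by
  classical
  refine ⟨fun i => NoComb.Balg m i, ?_⟩
  rintro ⟨A, hA⟩
  choose a ha using hA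
  set S : ℝ := ∑ i, 1 / c i with hS
  set K : ℝ := m + ∑ i, a i / c i with hK
  have key : ∀ T : ℕ, (T : ℝ) * (S - 1) ≤ K := by
    intro T
    set σ := NoComb.advSeq hm A T with hσ
    have hAcost : (T : ℝ) ≤ (detCost A σ : ℝ) := by
      exact_mod_cast NoComb.le_detCost hm A T
    have hBi : ∀ i : Fin m, (T : ℝ) / c i - a i / c i ≤ (detCost (NoComb.Balg m i) σ : ℝ) := by
      intro i
      have h1 : (T : ℝ) ≤ c i * (detCost (NoComb.Balg m i) σ : ℝ) + a i :=
        le_trans hAcost (ha i σ)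
      have h2 := (hc i)
      rw [← sub_div, div_le_iff₀ h2]
      linarith [mul_comm (c i) ((detCost (NoComb.Balg m i) σ : ℝ))]
    have hsumB : (∑ i : Fin m, (detCost (NoComb.Balg m i) σ : ℝ)) ≤ (m : ℝ) + T := by
      have := NoComb.sum_detCost_B hm A T
      exact_mod_cast this
    have h3 : (T : ℝ) * S - ∑ i, a i / c i ≤ (m : ℝ) + T := by
      calc (T : ℝ) * S - ∑ i, a i / c i
          = ∑ i : Fin m, ((T : ℝ) / c i - a i / c i) := by
            rw [Finset.sum_sub_distrib, hS, Finset.mul_sum]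
            congr 1
            apply Finset.sum_congr rfl
            intro i _
            rw [mul_one_div]
      _ ≤ ∑ i : Fin m, (detCost (NoComb.Balg m i) σ : ℝ) := Finset.sum_le_sum fun i _ => hBi i
      _ ≤ (m : ℝ) + T := hsumB
    rw [hK]
    nlinarith [h3]
  have hS1 : 0 < S - 1 := by rw [hS]; linarith
  obtain ⟨T, hT⟩ := exists_nat_gt (K / (S - 1))
  have hkey := key T
  rw [div_lt_iff₀ hS1] at hT
  linarith
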